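/- Let k be a perfect field of characteristic p > 0 endowed with a (possibly trivial) nonarchimedean absolute value. Then the completion of k with respect to this absolute value is a perfect field. (This is the paper's lemma that the completion of the perfect closure of a nonarchimedean field of characteristic p is perfect, applied to the perfect valued field given by the perfect closure.) -/
import Mathlib


universe u

/-- **Statement 18.** Let `k` be a perfect field of characteristic `p > 0` endowed with a
(possibly trivial) nonarchimedean absolute value. Then the completion of `k` with respect
to this absolute value is a perfect field. (The completion is formalized as any complete
nonarchimedean valued field `K` admitting an isometric embedding of `k` with dense range.) -/
theorem completion_perfectField
    (p : ℕ) (hp : p.Prime)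
    (k : Type u) [NormedField k] [IsUltrametricDist k] [CharP k p] [PerfectField k]
    (K : Type u) [NormedField K] [IsUltrametricDist K] [CompleteSpace K]
    (ι : k →+* K) (hι : Isometry ι) (hdense : DenseRange ι) :
    PerfectField K := by
  haveI : Fact p.Prime := ⟨hp⟩
  haveI : CharP K p := charP_of_injective_ringHom ι.injective p
  haveI : PerfectRing K p := by
    refine PerfectRing.ofSurjective K p ?_
    intro y
    have hy : y ∈ closure (Set.range ι) := hdense y
    obtain ⟨u, hu_mem, hu_lim⟩ := mem_closure_iff_seq_limit.mp hy
    choose x hx using hu_mem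
    choose z hz using fun n => surjective_frobenius k p (x n)
    set v : ℕ → K := fun n => ι (z n) with hv
    have hzp : ∀ j, v j ^ p = u j := fun j => by
      rw [hv, ← map_pow, ← frobenius_def, hz, hx]
    have key : ∀ m n, ‖v m - v n‖ ^ p = ‖u m - u n‖ := by
      intro m n
      rw [← norm_pow, sub_pow_char, hzp, hzp]
    have hcau : CauchySeq v := by
      rw [Metric.cauchySeq_iff]
      intro ε hε
      have hcu : CauchySeq u := hu_lim.cauchySeq
      obtain ⟨N, hN⟩ := Metric.cauchySeq_iff.mp hcu (ε ^ p) (by positivity)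
      refine ⟨N, fun m hm n hn => ?_⟩
      have h1 : ‖v m - v n‖ ^ p < ε ^ p := by
        rw [key m n, ← dist_eq_norm]
        exact hN m hm n hn
      rw [dist_eq_norm]
      exact lt_of_pow_lt_pow_left₀ p hε.le h1
    obtain ⟨w, hw⟩ := cauchySeq_tendsto_of_complete hcau
    refine ⟨w, ?_⟩
    have h1 : Filter.Tendsto (fun n => v n ^ p) Filter.atTop (nhds (w ^ p)) :=
      hw.pow p
    have h2 : (fun n => v n ^ p) = u := funext hzp
    rw [h2] at h1
    have := tendsto_nhds_unique h1 hu_lim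
    simpa [frobenius_def] using this
  exact PerfectRing.toPerfectField K p
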